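/- Let r₁, r₂, r₃, r₄ ∈ ℝ⁴ satisfy ω(r₁,r₂) = ω(r₂,r₃) = ω(r₃,r₄) = ω(r₄,r₁) = 0, suppose each of the pairs (r₁,r₂), (r₂,r₃), (r₃,r₄), (r₄,r₁) is linearly independent, and suppose V := span{r₁,r₂,r₃,r₄} has dimension 3. Let L = {v ∈ V : ω(v,w) = 0 for all w ∈ V} be the radical of the restriction of ω to V. Then either r₂ and r₄ each span L (in particular r₂ and r₄ are linearly dependent), or r₁ and r₃ each span L. -/

import Mathlib

/-- The ω-orthogonal complement of a subspace `P`: `{v : ω(v,p) = 0 for all p ∈ P}`. -/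
noncomputable def omegaPerp (ω : LinearMap.BilinForm ℝ (Fin 4 → ℝ))
    (P : Submodule ℝ (Fin 4 → ℝ)) : Submodule ℝ (Fin 4 → ℝ) :=
  ⨅ p ∈ P, LinearMap.ker (ω.flip p)

lemma skew_of_alt (ω : LinearMap.BilinForm ℝ (Fin 4 → ℝ)) (halt : ∀ v, ω v v = 0)
    (x y : Fin 4 → ℝ) : ω x y = -ω y x := by
  have h := halt (x + y)
  simp only [map_add, LinearMap.add_apply, halt x, halt y] at h
  linarith

lemma omegaPerp_eq (ω : LinearMap.BilinForm ℝ (Fin 4 → ℝ)) (halt : ∀ v, ω v v = 0)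
    (P : Submodule ℝ (Fin 4 → ℝ)) : omegaPerp ω P = ω.orthogonal P := by
  ext v
  simp only [omegaPerp, Submodule.mem_iInf, LinearMap.mem_ker, LinearMap.flip_apply,
    LinearMap.BilinForm.mem_orthogonal_iff, LinearMap.BilinForm.IsOrtho]
  constructor
  · intro h p hp
    have hv : ω v p = 0 := h p hp
    rw [skew_of_alt ω halt p v, hv, neg_zero]
  · intro h p hp
    show ω v p = 0
    rw [skew_of_alt ω halt v p, h p hp, neg_zero]

lemma finrank_span_pair' {x y : Fin 4 → ℝ} (h : LinearIndependent ℝ ![x, y]) :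
    Module.finrank ℝ (Submodule.span ℝ {x, y}) = 2 := by
  have hr : Set.range ![x, y] = {x, y} := by
    ext v; simp [Fin.exists_fin_two, or_comm]
  rw [← hr, finrank_span_eq_card h]
  simp

lemma li_of_ne (ω : LinearMap.BilinForm ℝ (Fin 4 → ℝ)) (halt : ∀ v, ω v v = 0)
    {x y : Fin 4 → ℝ} (hxy : ω x y ≠ 0) : LinearIndependent ℝ ![x, y] := by
  rw [LinearIndependent.pair_iff]
  intro s t hst
  have h1 : ω x (s • x + t • y) = 0 := by rw [hst]; simp
  have h2 : ω y (s • x + t • y) = 0 := by rw [hst]; simp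
  simp only [map_add, map_smul, smul_eq_mul, halt x, halt y, mul_zero, zero_add,
    add_zero] at h1 h2
  rw [skew_of_alt ω halt y x] at h2
  constructor
  · rcases mul_eq_zero.1 h2 with h | h
    · exact h
    · exact absurd (neg_eq_zero.mp h) hxy
  · rcases mul_eq_zero.1 h1 with h | h
    · exact h
    · exact absurd h hxy

lemma plane_inf_orth (ω : LinearMap.BilinForm ℝ (Fin 4 → ℝ)) (halt : ∀ v, ω v v = 0)
    {x y : Fin 4 → ℝ} (hxy : ω x y ≠ 0) :
    Submodule.span ℝ {x, y} ⊓ ω.orthogonal (Submodule.span ℝ {x, y}) = ⊥ := by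
  rw [eq_bot_iff]
  rintro v ⟨hvW, hvO⟩
  have h1 : ω x v = 0 := hvO x (Submodule.subset_span (by simp))
  have h2 : ω y v = 0 := hvO y (Submodule.subset_span (by simp))
  obtain ⟨s, t, rfl⟩ := Submodule.mem_span_pair.1 hvW
  simp only [map_add, map_smul, smul_eq_mul, halt x, halt y, mul_zero, zero_add,
    add_zero] at h1 h2
  rw [skew_of_alt ω halt y x] at h2
  have ht : t = 0 := by
    rcases mul_eq_zero.1 h1 with h | h
    · exact h
    · exact absurd h hxy
  have hs : s = 0 := by
    rcases mul_eq_zero.1 h2 with h | h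
    · exact h
    · exact absurd (neg_eq_zero.mp h) hxy
  simp [hs, ht]

lemma mem_orthogonal_pair (ω : LinearMap.BilinForm ℝ (Fin 4 → ℝ))
    (x y z : Fin 4 → ℝ) (h1 : ω x z = 0) (h2 : ω y z = 0) :
    z ∈ ω.orthogonal (Submodule.span ℝ {x, y}) := by
  intro n hn
  have hker : Submodule.span ℝ ({x, y} : Set (Fin 4 → ℝ)) ≤
      LinearMap.ker (ω.flip z) := by
    rw [Submodule.span_le]
    intro u hu
    rcases hu with rfl | rfl <;> simpa [LinearMap.mem_ker]
  simpa [LinearMap.mem_ker, LinearMap.BilinForm.IsOrtho] using hker hn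

lemma mem_orthogonal_of (ω : LinearMap.BilinForm ℝ (Fin 4 → ℝ))
    (r₁ r₂ r₃ r₄ : Fin 4 → ℝ) (V : Submodule ℝ (Fin 4 → ℝ))
    (hV : V = Submodule.span ℝ {r₁, r₂, r₃, r₄}) (z : Fin 4 → ℝ)
    (h1 : ω r₁ z = 0) (h2 : ω r₂ z = 0) (h3 : ω r₃ z = 0) (h4 : ω r₄ z = 0) :
    z ∈ ω.orthogonal V := by
  intro n hn
  rw [hV] at hn
  have hker : Submodule.span ℝ ({r₁, r₂, r₃, r₄} : Set (Fin 4 → ℝ)) ≤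
      LinearMap.ker (ω.flip z) := by
    rw [Submodule.span_le]
    intro u hu
    simp only [Set.mem_insert_iff, Set.mem_singleton_iff] at hu
    rcases hu with rfl | rfl | rfl | rfl <;> simpa [LinearMap.mem_ker]
  simpa [LinearMap.mem_ker, LinearMap.BilinForm.IsOrtho] using hker hn

lemma aux (ω : LinearMap.BilinForm ℝ (Fin 4 → ℝ))
    (halt : ∀ v, ω v v = 0)
    (r₁ r₂ r₃ r₄ : Fin 4 → ℝ)
    (h12 : ω r₁ r₂ = 0) (h23 : ω r₂ r₃ = 0) (h34 : ω r₃ r₄ = 0) (h41 : ω r₄ r₁ = 0)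
    (hne2 : r₂ ≠ 0) (hne4 : r₄ ≠ 0)
    (V : Submodule ℝ (Fin 4 → ℝ)) (hV : V = Submodule.span ℝ {r₁, r₂, r₃, r₄})
    (hdim : Module.finrank ℝ V = 3)
    (ha : ω r₁ r₃ ≠ 0) (hb : ω r₂ r₄ = 0) :
    Submodule.span ℝ {r₂} = V ⊓ omegaPerp ω V ∧
      Submodule.span ℝ {r₄} = V ⊓ omegaPerp ω V := by
  have hskew := skew_of_alt ω halt
  rw [omegaPerp_eq ω halt]
  have hr2V : r₂ ∈ V := by rw [hV]; exact Submodule.subset_span (by simp)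
  have hr4V : r₄ ∈ V := by rw [hV]; exact Submodule.subset_span (by simp)
  have hr2L : r₂ ∈ V ⊓ ω.orthogonal V := by
    refine ⟨hr2V, mem_orthogonal_of ω r₁ r₂ r₃ r₄ V hV r₂ h12 (halt r₂) ?_ ?_⟩
    · rw [hskew r₃ r₂, h23, neg_zero]
    · rw [hskew r₄ r₂, hb, neg_zero]
  have hr4L : r₄ ∈ V ⊓ ω.orthogonal V := by
    refine ⟨hr4V, mem_orthogonal_of ω r₁ r₂ r₃ r₄ V hV r₄ ?_ hb h34 (halt r₄)⟩
    · rw [hskew r₁ r₄, h41, neg_zero]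
  -- the plane spanned by r₁, r₃ and its orthogonal
  set W : Submodule ℝ (Fin 4 → ℝ) := Submodule.span ℝ {r₁, r₃} with hW
  have hWdim : Module.finrank ℝ W = 2 := finrank_span_pair' (li_of_ne ω halt ha)
  have hWV : W ≤ V := by
    rw [hW, hV]
    apply Submodule.span_mono
    intro u hu
    rcases hu with rfl | rfl <;> simp
  have hWnd : W ⊓ ω.orthogonal W = ⊥ := plane_inf_orth ω halt ha
  set X : Submodule ℝ (Fin 4 → ℝ) := V ⊓ ω.orthogonal W with hX
  have hLX : V ⊓ ω.orthogonal V ≤ X :=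
    inf_le_inf le_rfl (LinearMap.BilinForm.orthogonal_le hWV)
  have hXdim : Module.finrank ℝ X ≤ 1 := by
    have hsum := Submodule.finrank_sup_add_finrank_inf_eq W X
    have hinf : W ⊓ X = ⊥ := by
      rw [eq_bot_iff, ← hWnd]
      exact inf_le_inf le_rfl inf_le_right
    have hsup : W ⊔ X ≤ V := sup_le hWV inf_le_left
    have hsupdim : Module.finrank ℝ (W ⊔ X : Submodule ℝ (Fin 4 → ℝ)) ≤ 3 := by
      rw [← hdim]; exact Submodule.finrank_mono hsup
    rw [hinf, hWdim] at hsum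
    simp only [finrank_bot, add_zero] at hsum
    omega
  have key : ∀ z : Fin 4 → ℝ, z ≠ 0 → z ∈ V ⊓ ω.orthogonal V →
      Submodule.span ℝ {z} = V ⊓ ω.orthogonal V := by
    intro z hz hzL
    have h1 : Submodule.span ℝ {z} ≤ V ⊓ ω.orthogonal V := by
      rw [Submodule.span_singleton_le_iff_mem]; exact hzL
    refine (Submodule.eq_of_le_of_finrank_le h1 ?_)
    have : Module.finrank ℝ (V ⊓ ω.orthogonal V : Submodule ℝ (Fin 4 → ℝ)) ≤ 1 :=
      le_trans (Submodule.finrank_mono hLX) hXdim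
    rwa [finrank_span_singleton hz]
  exact ⟨key r₂ hne2 hr2L, key r₄ hne4 hr4L⟩

theorem stmt_9 (ω : LinearMap.BilinForm ℝ (Fin 4 → ℝ))
    (halt : ∀ v, ω v v = 0)
    (hnd : ∀ v, (∀ w, ω v w = 0) → v = 0)
    (r₁ r₂ r₃ r₄ : Fin 4 → ℝ)
    (h12 : ω r₁ r₂ = 0) (h23 : ω r₂ r₃ = 0) (h34 : ω r₃ r₄ = 0) (h41 : ω r₄ r₁ = 0)
    (hli12 : LinearIndependent ℝ ![r₁, r₂]) (hli23 : LinearIndependent ℝ ![r₂, r₃])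
    (hli34 : LinearIndependent ℝ ![r₃, r₄]) (hli41 : LinearIndependent ℝ ![r₄, r₁])
    (V : Submodule ℝ (Fin 4 → ℝ)) (hV : V = Submodule.span ℝ {r₁, r₂, r₃, r₄})
    (hdim : Module.finrank ℝ V = 3)
    (L : Submodule ℝ (Fin 4 → ℝ)) (hL : L = V ⊓ omegaPerp ω V) :
    (Submodule.span ℝ {r₂} = L ∧ Submodule.span ℝ {r₄} = L) ∨
    (Submodule.span ℝ {r₁} = L ∧ Submodule.span ℝ {r₃} = L) := by
  have hskew := skew_of_alt ω halt
  have hne1 : r₁ ≠ 0 := by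
    have := hli12.ne_zero 0; simpa using this
  have hne2 : r₂ ≠ 0 := by
    have := hli12.ne_zero 1; simpa using this
  have hne3 : r₃ ≠ 0 := by
    have := hli23.ne_zero 1; simpa using this
  have hne4 : r₄ ≠ 0 := by
    have := hli34.ne_zero 1; simpa using this
  subst hL
  by_cases ha : ω r₁ r₃ = 0
  · by_cases hb : ω r₂ r₄ = 0
    · -- both zero : V is totally isotropic of dimension 3, contradiction
      exfalso
      have m1 : r₁ ∈ ω.orthogonal V :=
        mem_orthogonal_of ω r₁ r₂ r₃ r₄ V hV r₁ (halt r₁)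
          (by rw [hskew r₂ r₁, h12, neg_zero])
          (by rw [hskew r₃ r₁, ha, neg_zero]) h41
      have m2 : r₂ ∈ ω.orthogonal V :=
        mem_orthogonal_of ω r₁ r₂ r₃ r₄ V hV r₂ h12 (halt r₂)
          (by rw [hskew r₃ r₂, h23, neg_zero])
          (by rw [hskew r₄ r₂, hb, neg_zero])
      have m3 : r₃ ∈ ω.orthogonal V :=
        mem_orthogonal_of ω r₁ r₂ r₃ r₄ V hV r₃ ha h23 (halt r₃)
          (by rw [hskew r₄ r₃, h34, neg_zero])
      have m4 : r₄ ∈ ω.orthogonal V :=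
        mem_orthogonal_of ω r₁ r₂ r₃ r₄ V hV r₄
          (by rw [hskew r₁ r₄, h41, neg_zero]) hb h34 (halt r₄)
      have hVorth : V ≤ ω.orthogonal V := by
        rw [hV, Submodule.span_le]
        intro u hu
        simp only [Set.mem_insert_iff, Set.mem_singleton_iff] at hu
        rcases hu with h | h | h | h
        · rw [h, ← hV]; exact m1
        · rw [h, ← hV]; exact m2
        · rw [h, ← hV]; exact m3
        · rw [h, ← hV]; exact m4
      have hrefl : ω.IsRefl := by
        intro x y h
        rw [hskew y x, h, neg_zero]
      have hndg : ω.Nondegenerate :=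
          (LinearMap.IsRefl.nondegenerate_iff_separatingLeft hrefl).2 hnd
      have horth : Module.finrank ℝ (ω.orthogonal V) =
          Module.finrank ℝ (Fin 4 → ℝ) - Module.finrank ℝ V :=
        LinearMap.BilinForm.finrank_orthogonal hndg V
      have h4 : Module.finrank ℝ (Fin 4 → ℝ) = 4 := by simp
      have := Submodule.finrank_mono hVorth
      rw [horth, h4, hdim] at this
      omega
    · -- ω r₂ r₄ ≠ 0 : relabel cyclically
      have hV' : V = Submodule.span ℝ {r₂, r₃, r₄, r₁} := by
        rw [hV]
        congr 1
        ext u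
        simp only [Set.mem_insert_iff, Set.mem_singleton_iff]
        tauto
      have hb' : ω r₃ r₁ = 0 := by rw [hskew r₃ r₁, ha, neg_zero]
      obtain ⟨k3, k1⟩ := aux ω halt r₂ r₃ r₄ r₁ h23 h34 h41 h12 hne3 hne1 V hV' hdim hb hb'
      exact Or.inr ⟨k1, k3⟩
  · by_cases hb : ω r₂ r₄ = 0
    · obtain ⟨k2, k4⟩ := aux ω halt r₁ r₂ r₃ r₄ h12 h23 h34 h41 hne2 hne4 V hV hdim ha hb
      exact Or.inl ⟨k2, k4⟩
    · -- both nonzero : dim V = 4, contradiction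
      exfalso
      set W : Submodule ℝ (Fin 4 → ℝ) := Submodule.span ℝ {r₁, r₃} with hW
      set U : Submodule ℝ (Fin 4 → ℝ) := Submodule.span ℝ {r₂, r₄} with hU
      have hWdim : Module.finrank ℝ W = 2 := finrank_span_pair' (li_of_ne ω halt ha)
      have hUdim : Module.finrank ℝ U = 2 := finrank_span_pair' (li_of_ne ω halt hb)
      have m2 : r₂ ∈ ω.orthogonal W :=
        mem_orthogonal_pair ω r₁ r₃ r₂ h12 (by rw [hskew r₃ r₂, h23, neg_zero])
      have m4 : r₄ ∈ ω.orthogonal W :=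
        mem_orthogonal_pair ω r₁ r₃ r₄ (by rw [hskew r₁ r₄, h41, neg_zero]) h34
      have hUorth : U ≤ ω.orthogonal W := by
        rw [hU, Submodule.span_le]
        intro u hu
        simp only [Set.mem_insert_iff, Set.mem_singleton_iff] at hu
        rcases hu with h | h
        · exact h ▸ m2
        · exact h ▸ m4
      have hWnd : W ⊓ ω.orthogonal W = ⊥ := plane_inf_orth ω halt ha
      have hinf : W ⊓ U = ⊥ := by
        rw [eq_bot_iff, ← hWnd]
        exact inf_le_inf le_rfl hUorth
      have hsup : W ⊔ U ≤ V := by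
        apply sup_le <;> rw [hV] <;> apply Submodule.span_mono <;>
          intro u hu <;> rcases hu with rfl | rfl <;> simp
      have hsum := Submodule.finrank_sup_add_finrank_inf_eq W U
      rw [hinf, hWdim, hUdim] at hsum
      simp only [finrank_bot, add_zero] at hsum
      have := Submodule.finrank_mono hsup
      rw [hsum, hdim] at this
      omega
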